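/- arXiv:2307.10729 — 2 statements merged into one kernel-verified Lean document; each statement's English description precedes it below -/
import Mathlib

section
/- Let m ∈ ℕ, let V = V⁺ ∪ V⁻ be a partition of the m qubit indices, and for a ∈ {0,1}^m define φ(a) = |a restricted to V⁺| − |a restricted to V⁻| (difference of Hamming weights). Suppose S ⊆ {0,1}^m is a subgroup (under XOR) and L ∈ {0,1}^m satisfies: for all s ∈ S and x ∈ {0,1}, φ(s + xL) ≡ 7x (mod 8). Then applying T on all qubits in V⁺ and T† on all qubits in V⁻ maps the state |x̄⟩ = |S|^{-1/2} Σ_{s∈S} |s + xL⟩ to e^{−iπx/4}|x̄⟩, i.e., it implements a logical T† gate (equivalently a logical T up to relabeling) on the code spanned by |0̄⟩, |1̄⟩. -/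
/-- `φ(a)` = (Hamming weight of `a` on `V⁺`) − (Hamming weight of `a` on `V⁻`). -/
def phiSigned {m : ℕ} (Vp Vm : Finset (Fin m)) (a : Fin m → ZMod 2) : ℤ :=
  ((Vp.filter fun v => a v = 1).card : ℤ) - ((Vm.filter fun v => a v = 1).card : ℤ)

-- The CSS codeword `|x̄⟩ = |S|^{-1/2} Σ_{s∈S} |s + xL⟩`, given by its amplitudes.
open Classical in
noncomputable def codeword {m : ℕ} (S : AddSubgroup (Fin m → ZMod 2))
    (L : Fin m → ZMod 2) (x : ZMod 2) : (Fin m → ZMod 2) → ℂ :=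
  fun a => if a + x • L ∈ S then (Real.sqrt (Nat.card S) : ℂ)⁻¹ else 0

/-- If `φ(s + xL) ≡ 7x (mod 8)` for all stabilizers `s` and logical bits `x`, then the
transversal operator applying `T` on `V⁺` and `T†` on `V⁻` (which multiplies the basis
vector `|a⟩` by `e^{iπφ(a)/4}`) maps `|x̄⟩` to `e^{-iπx/4}|x̄⟩`: a logical `T†`. -/
theorem stmt1 {m : ℕ} (Vp Vm : Finset (Fin m))
    (hdisj : Disjoint Vp Vm) (hunion : Vp ∪ Vm = Finset.univ)
    (S : AddSubgroup (Fin m → ZMod 2)) (L : Fin m → ZMod 2)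
    (h : ∀ s ∈ S, ∀ x : ZMod 2,
      phiSigned Vp Vm (s + x • L) ≡ 7 * (x.val : ℤ) [ZMOD 8]) :
    ∀ (x : ZMod 2) (a : Fin m → ZMod 2),
      Complex.exp (Real.pi * Complex.I * (phiSigned Vp Vm a : ℂ) / 4) * codeword S L x a =
        Complex.exp (-(Real.pi * Complex.I * (x.val : ℂ)) / 4) * codeword S L x a := by
  intro x a
  classical
  by_cases hs : a + x • L ∈ S
  · have key := h (a + x • L) hs x
    have haa : a + x • L + x • L = a := by
      funext v
      simp only [Pi.add_apply, Pi.smul_apply]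
      ring_nf
      have h2 : (2 : ZMod 2) = 0 := rfl
      rw [h2, mul_zero, add_zero]
    rw [haa] at key
    obtain ⟨k, hk⟩ := (Int.ModEq.dvd key.symm)
    -- phiSigned a - 7*x.val = 8*k?  Int.ModEq.dvd : 8 ∣ (7x - φ)? check direction later
    have hphi : (phiSigned Vp Vm a : ℤ) = 7 * (x.val : ℤ) + 8 * k := by linarith
    have hphiC : (phiSigned Vp Vm a : ℂ) = 7 * (x.val : ℂ) + 8 * (k : ℂ) := by
      exact_mod_cast congrArg (Int.cast : ℤ → ℂ) hphi
    congr 1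
    rw [hphiC]
    have : Real.pi * Complex.I * (7 * (x.val : ℂ) + 8 * (k : ℂ)) / 4
        = -(Real.pi * Complex.I * (x.val : ℂ)) / 4
          + ((x.val : ℂ) + (k : ℂ)) * (2 * Real.pi * Complex.I) := by ring
    rw [this, Complex.exp_add]
    have hx : ((x.val : ℂ) + (k : ℂ)) = (((x.val : ℤ) + k : ℤ) : ℂ) := by push_cast; ring
    rw [hx, Complex.exp_int_mul_two_pi_mul_I, mul_one]
  · simp [codeword, hs]
end

section
/- Let two CSS-type codewords be given: |x̄⟩ = |S|^{-1/2} Σ_{s∈S}|s + xL⟩ and |ȳ⟩ = |S|^{-1/2} Σ_{t∈S}|t + yL⟩ on m qubits each, where S ⊆ {0,1}^m is a subgroup and L ∉ S. Suppose applying T on V⁺ and T† on V⁻ sends each basis vector |s + xL⟩ to e^{iπx/4}|s + xL⟩ (phase depending only on the logical bit x). Then applying, transversally across the two blocks, the gate CS on each pair of corresponding qubits in V⁺ and CS† on each pair in V⁻ maps |x̄⟩⊗|ȳ⟩ to i^{xy}|x̄⟩⊗|ȳ⟩, i.e., implements the logical CS gate. -/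
/-- `ψ(a,b) = Σ_{v∈V⁺} a_v b_v − Σ_{v∈V⁻} a_v b_v`: the signed exponent accumulated by
transversal `CS` on `V⁺` and `CS†` on `V⁻` applied to `|a⟩ ⊗ |b⟩`. -/
def psiSigned {m : ℕ} (Vp Vm : Finset (Fin m)) (a b : Fin m → ZMod 2) : ℤ :=
  ((Vp.filter fun v => a v = 1 ∧ b v = 1).card : ℤ) -
    ((Vm.filter fun v => a v = 1 ∧ b v = 1).card : ℤ)

lemma zmod2_cases : ∀ z : ZMod 2, z = 0 ∨ z = 1 := by decide

lemma count_split {m : ℕ} (W : Finset (Fin m)) (a b : Fin m → ZMod 2) :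
    ((W.filter fun v => a v = 1).card : ℤ) + (W.filter fun v => b v = 1).card
      = (W.filter fun v => (a + b) v = 1).card
        + 2 * (W.filter fun v => a v = 1 ∧ b v = 1).card := by
  classical
  have key : (W.filter fun v => a v = 1).card + (W.filter fun v => b v = 1).card
      = (W.filter fun v => (a + b) v = 1).card
        + 2 * (W.filter fun v => a v = 1 ∧ b v = 1).card := by
    simp only [Finset.card_filter]
    rw [← Finset.sum_add_distrib, Finset.mul_sum, ← Finset.sum_add_distrib]
    refine Finset.sum_congr rfl fun v _ => ?_
    rcases zmod2_cases (a v) with ha | ha <;> rcases zmod2_cases (b v) with hb | hb <;>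
      simp [ha, hb, Pi.add_apply]
  exact_mod_cast congrArg (Nat.cast : ℕ → ℤ) key

lemma psi_key {m : ℕ} (Vp Vm : Finset (Fin m)) (a b : Fin m → ZMod 2) :
    2 * psiSigned Vp Vm a b
      = phiSigned Vp Vm a + phiSigned Vp Vm b - phiSigned Vp Vm (a + b) := by
  have h1 := count_split Vp a b
  have h2 := count_split Vm a b
  unfold psiSigned phiSigned
  omega

/-- If the transversal `T(V⁺)T†(V⁻)` phase on each basis vector `|s + xL⟩` equals
`e^{iπx/4}` (i.e. `φ(s+xL) ≡ x (mod 8)`), then the transversal application of `CS` on the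
pairs in `V⁺` and `CS†` on the pairs in `V⁻` — which multiplies `|a⟩⊗|b⟩` by
`i^{ψ(a,b)} = e^{iπψ(a,b)/2}` — maps `|x̄⟩⊗|ȳ⟩` to `i^{xy} |x̄⟩⊗|ȳ⟩`: the logical `CS`. -/
theorem stmt2 {m : ℕ} (Vp Vm : Finset (Fin m))
    (hdisj : Disjoint Vp Vm) (hunion : Vp ∪ Vm = Finset.univ)
    (S : AddSubgroup (Fin m → ZMod 2)) (L : Fin m → ZMod 2) (hL : L ∉ S)
    (h : ∀ s ∈ S, ∀ x : ZMod 2,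
      phiSigned Vp Vm (s + x • L) ≡ (x.val : ℤ) [ZMOD 8]) :
    ∀ (x y : ZMod 2) (a b : Fin m → ZMod 2),
      Complex.exp (Real.pi * Complex.I * (psiSigned Vp Vm a b : ℂ) / 2) *
          (codeword S L x a * codeword S L y b) =
        Complex.I ^ (x.val * y.val) * (codeword S L x a * codeword S L y b) := by
  intro x y a b
  by_cases ha : a + x • L ∈ S
  · by_cases hb : b + y • L ∈ S
    · have hzz : ∀ z : ZMod 2, z + z = 0 := by decide
      have hxx : ∀ (z : ZMod 2), z • L + z • L = 0 := fun z => by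
        rw [← add_smul, hzz, zero_smul]
      have key : Complex.exp (Real.pi * Complex.I * (psiSigned Vp Vm a b : ℂ) / 2)
          = Complex.I ^ (x.val * y.val) := by
        have hA : phiSigned Vp Vm a ≡ (x.val : ℤ) [ZMOD 8] := by
          have := h _ ha x
          rwa [add_assoc, hxx, add_zero] at this
        have hB : phiSigned Vp Vm b ≡ (y.val : ℤ) [ZMOD 8] := by
          have := h _ hb y
          rwa [add_assoc, hxx, add_zero] at this
        have hab : (a + x • L) + (b + y • L) ∈ S := S.add_mem ha hb
        have hC : phiSigned Vp Vm (a + b) ≡ (((x + y).val : ℤ)) [ZMOD 8] := by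
          have := h _ hab (x + y)
          have heq : (a + x • L) + (b + y • L) + (x + y) • L = a + b := by
            have h2L : (2 : Fin m → ZMod 2) * L = 0 := by
              funext v
              show (2 : ZMod 2) * L v = 0
              rw [show (2 : ZMod 2) = 0 from rfl, zero_mul]
            rw [add_smul]
            abel_nf
            simp [two_nsmul, hxx, h2L]
          rwa [heq] at this
        have hval : (x.val : ℤ) + y.val - ((x + y).val : ℤ) = 2 * (x.val * y.val) := by
          rcases zmod2_cases x with hx | hx <;> rcases zmod2_cases y with hy | hy <;>
            subst hx <;> subst hy <;> decide
        have h2 : 2 * psiSigned Vp Vm a b ≡ 2 * (x.val * y.val) [ZMOD 8] := by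
          rw [psi_key]
          calc phiSigned Vp Vm a + phiSigned Vp Vm b - phiSigned Vp Vm (a + b)
              ≡ (x.val : ℤ) + y.val - ((x + y).val : ℤ) [ZMOD 8] :=
                (hA.add hB).sub hC
            _ = 2 * (x.val * y.val) := hval
        obtain ⟨k, hk⟩ := h2.dvd
        have hψ : psiSigned Vp Vm a b = ((x.val * y.val : ℕ) : ℤ) + 4 * (-k) := by
          push_cast at hk ⊢; linarith
        have hexp : Complex.exp (Real.pi * Complex.I * (psiSigned Vp Vm a b : ℂ) / 2)
            = Complex.I ^ (psiSigned Vp Vm a b) := by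
          rw [show (Real.pi : ℂ) * Complex.I * (psiSigned Vp Vm a b : ℂ) / 2
              = (psiSigned Vp Vm a b : ℂ) * ((Real.pi / 2 : ℝ) * Complex.I) by
            push_cast; ring]
          rw [Complex.exp_int_mul, Complex.exp_mul_I]
          norm_num [Complex.ofReal_cos, Complex.ofReal_sin, Real.cos_pi_div_two,
            Real.sin_pi_div_two]
        have h4 : Complex.I ^ (4 : ℤ) = 1 := by
          rw [show (4 : ℤ) = ((4 : ℕ) : ℤ) from rfl, zpow_natCast, Complex.I_pow_four]
        rw [hexp, hψ, zpow_add₀ Complex.I_ne_zero, zpow_mul, h4, one_zpow, mul_one,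
          zpow_natCast]
      rw [key]
    · simp [codeword, hb]
  · simp [codeword, ha]
end
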